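/- Let ξ be an additive U-cocycle with orthogonal increments and let W be a multiplicative U-cocycle that is Markovian with respect to ξ. Define ξ'_t = W_t ξ_t for t ≤ 0 and ξ'_t = ξ_t for t > 0. Then ξ' has orthogonal increments: ⟨ξ'_{t₁} − ξ'_{s₁}, ξ'_{t₂} − ξ'_{s₂}⟩ = 0 whenever s₁ ≤ t₁ ≤ s₂ ≤ t₂. -/

import Mathlib

open Filter Topology

noncomputable section

/-- The closed linear span of the increments `ξ s - ξ r` with `s, r ≥ t`. -/
def futureSpan {H : Type*} [NormedAddCommGroup H] [InnerProductSpace ℂ H]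
    (ξ : ℝ → H) (t : ℝ) : Submodule ℂ H :=
  (Submodule.span ℂ {x | ∃ s r, t ≤ s ∧ t ≤ r ∧ x = ξ s - ξ r}).topologicalClosure

/-- the Markovian cocycle perturbation `ξ'` of an additive `U`-cocycle `ξ`
with orthogonal increments again has orthogonal increments. -/
theorem stmt6
    {H : Type*} [NormedAddCommGroup H] [InnerProductSpace ℂ H] [CompleteSpace H]
    (U : ℝ → (H ≃ₗᵢ[ℂ] H)) (W : ℝ → (H ≃ₗᵢ[ℂ] H)) (ξ ξ' : ℝ → H)
    (hUgrp : ∀ s t : ℝ, ∀ x : H, U (s + t) x = U s (U t x))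
    (hU0 : ∀ x : H, U 0 x = x)
    (hUcont : ∀ x : H, Continuous fun t : ℝ => U t x)
    (hWcont : ∀ x : H, Continuous fun t : ℝ => W t x)
    (hW0 : ∀ x : H, W 0 x = x)
    (hWcoc : ∀ t s : ℝ, ∀ x : H, W (t + s) x = W t (U t (W s ((U t).symm x))))
    (hξcont : Continuous ξ) (hξ0 : ξ 0 = 0)
    (hξcoc : ∀ t s : ℝ, ξ (t + s) = ξ t + U t (ξ s))
    (hortho : ∀ s₁ t₁ s₂ t₂ : ℝ, Disjoint (Set.Ioo s₁ t₁) (Set.Ioo s₂ t₂) →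
      (inner ℂ (ξ t₁ - ξ s₁) (ξ t₂ - ξ s₂) : ℂ) = 0)
    (hWmark : ∀ t : ℝ, 0 ≤ t → ∀ f ∈ futureSpan ξ t, W t f = f)
    (hξ'neg : ∀ t : ℝ, t ≤ 0 → ξ' t = W t (ξ t))
    (hξ'pos : ∀ t : ℝ, 0 < t → ξ' t = ξ t) :
    ∀ s₁ t₁ s₂ t₂ : ℝ, s₁ ≤ t₁ → t₁ ≤ s₂ → s₂ ≤ t₂ →
      (inner ℂ (ξ' t₁ - ξ' s₁) (ξ' t₂ - ξ' s₂) : ℂ) = 0 := by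
  have hUsymm : ∀ t : ℝ, ∀ x : H, (U t).symm x = U (-t) x := by
    intro t x
    have h : x = U t (U (-t) x) := by rw [← hUgrp, add_neg_cancel, hU0]
    exact (U t).symm_apply_eq.mpr h
  have hshift : ∀ a b : ℝ, U a (ξ b) = ξ (a + b) - ξ a := by
    intro a b; rw [hξcoc a b]; abel
  have memF : ∀ t a b : ℝ, t ≤ a → t ≤ b → ξ a - ξ b ∈ futureSpan ξ t := by
    intro t a b ha hb
    exact Submodule.le_topologicalClosure _ (Submodule.subset_span ⟨a, b, ha, hb, rfl⟩)
  -- Key lemma: for u ≤ v and increments living on [v, ∞), W v and W u agree.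
  have L2 : ∀ u v a b : ℝ, u ≤ v → v ≤ a → v ≤ b →
      W v (ξ a - ξ b) = W u (ξ a - ξ b) := by
    intro u v a b huv hva hvb
    have h1 : v = u + (v - u) := by ring
    rw [h1, hWcoc u (v - u)]
    have h2 : (U u).symm (ξ a - ξ b) = ξ (a - u) - ξ (b - u) := by
      rw [hUsymm, map_sub, hshift, hshift]
      have e1 : -u + a = a - u := by ring
      have e2 : -u + b = b - u := by ring
      rw [e1, e2]; abel
    rw [h2, hWmark (v - u) (by linarith) _
      (memF (v - u) (a - u) (b - u) (by linarith) (by linarith))]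
    rw [map_sub, hshift, hshift]
    have e1 : u + (a - u) = a := by ring
    have e2 : u + (b - u) = b := by ring
    rw [e1, e2]
    congr 1
    abel
  -- Uniform increment formula: ξ' t - ξ' s = W (min s 0) (ξ t - ξ s) for s ≤ t.
  have incr : ∀ s t : ℝ, s ≤ t → ξ' t - ξ' s = W (min s 0) (ξ t - ξ s) := by
    intro s t hst
    rcases le_or_gt s 0 with hs | hs
    · rw [min_eq_left hs]
      rcases le_or_gt t 0 with ht | ht
      · -- both ≤ 0
        rw [hξ'neg t ht, hξ'neg s hs]
        have hWt : W t (ξ t) = W s (ξ t) := by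
          have := L2 s t t 0 hst le_rfl ht
          rwa [hξ0, sub_zero] at this
        rw [hWt, ← map_sub]
      · -- s ≤ 0 < t
        rw [hξ'pos t ht, hξ'neg s hs]
        have hWs : W s (ξ t) = ξ t := by
          have := L2 s 0 t 0 hs ht.le le_rfl
          rw [hξ0, sub_zero, hW0] at this
          exact this.symm
        rw [map_sub, hWs]
    · rw [min_eq_right hs.le, hW0, hξ'pos t (lt_of_lt_of_le hs hst), hξ'pos s hs]
  intro s₁ t₁ s₂ t₂ h₁ h₂ h₃
  rw [incr s₁ t₁ h₁, incr s₂ t₂ h₃]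
  have hmm : min s₁ 0 ≤ min s₂ 0 := min_le_min (by linarith) le_rfl
  have hB : W (min s₂ 0) (ξ t₂ - ξ s₂) = W (min s₁ 0) (ξ t₂ - ξ s₂) :=
    L2 (min s₁ 0) (min s₂ 0) t₂ s₂ hmm (le_trans (min_le_left _ _) (by linarith))
      (min_le_left _ _)
  rw [hB, LinearIsometryEquiv.inner_map_map]
  apply hortho
  rw [Set.disjoint_left]
  rintro x ⟨_, hx1⟩ ⟨hx2, _⟩
  linarith
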